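/- arXiv:1205.3362 — 2 statements merged into one kernel-verified Lean document; each statement's English description precedes it below -/
import Mathlib

section
/- Let U : ℝ² → [0,∞) be continuous with U(x) = u₀(x/|x|)|x|^{-α}(1+o(1)) as |x| → ∞, where α > 0 and u₀ ∈ C(S¹) with u₀ > 0. Then as s ↓ 0, the Lebesgue measure |{x ∈ ℝ² : U(x) > s}| = s^{-2/α} (1/2)∫_{S¹} u₀(t)^{2/α} dt · (1 + o(1)). -/
open MeasureTheory Filter Real Set

noncomputable def circ (θ : ℝ) : EuclideanSpace ℝ (Fin 2) := WithLp.toLp 2 ![Real.cos θ, Real.sin θ]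

noncomputable def φeq : (ℝ × ℝ) ≃ᵐ EuclideanSpace ℝ (Fin 2) :=
  ((MeasurableEquiv.toLp 2 (Fin 2 → ℝ)).symm.trans MeasurableEquiv.finTwoArrow).symm

lemma φeq_mp : MeasurePreserving (φeq) volume volume :=
  ((EuclideanSpace.volume_preserving_symm_measurableEquiv_toLp (Fin 2)).trans
    (volume_preserving_finTwoArrow ℝ)).symm _

lemma φeq_polar (p : ℝ × ℝ) : φeq (polarCoord.symm p) = p.1 • circ p.2 := by
  ext i
  fin_cases i <;> rfl

lemma norm_circ (θ : ℝ) : ‖circ θ‖ = 1 := by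
  rw [show circ θ = WithLp.toLp 2 ![Real.cos θ, Real.sin θ] from rfl, EuclideanSpace.norm_eq]
  simp [Fin.sum_univ_two, sq_abs]

lemma cont_circ : Continuous circ := by
  apply (PiLp.continuous_toLp 2 (fun _ : Fin 2 => ℝ)).comp
  apply continuous_pi
  intro i
  fin_cases i
  · simpa using Real.continuous_cos
  · simpa using Real.continuous_sin

lemma norm_smul_circ (r θ : ℝ) (hr : 0 ≤ r) : ‖r • circ θ‖ = r := by
  rw [norm_smul, norm_circ]
  simp [abs_of_nonneg hr]

lemma cond_iff (α s b r : ℝ) (hα : 0 < α) (hs : 0 < s) (hb : 0 < b) (hr : 0 < r) :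
    (s < b * r ^ (-α)) ↔ r < (b / s) ^ α⁻¹ := by
  rw [Real.rpow_neg hr.le, ← div_eq_mul_inv, lt_div_iff₀ (Real.rpow_pos_of_pos hr α),
    Real.lt_rpow_inv_iff_of_pos hr.le (by positivity) hα, lt_div_iff₀ hs, mul_comm]

theorem my_lintegral_comp_polarCoord_symm (f : ℝ × ℝ → ENNReal) :
    (∫⁻ p in polarCoord.target, ENNReal.ofReal p.1 * f (polarCoord.symm p)) = ∫⁻ p, f p := by
  set B : ℝ × ℝ → ℝ × ℝ →L[ℝ] ℝ × ℝ := fun p =>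
    LinearMap.toContinuousLinearMap (Matrix.toLin (Module.Basis.finTwoProd ℝ) (Module.Basis.finTwoProd ℝ)
      !![cos p.2, -p.1 * sin p.2; sin p.2, p.1 * cos p.2])
  have A : ∀ p ∈ polarCoord.target, HasFDerivWithinAt polarCoord.symm (B p) polarCoord.target p :=
    fun p _ => (hasFDerivAt_polarCoord_symm p).hasFDerivWithinAt
  have B_det : ∀ p, (B p).det = p.1 := by
    intro p
    conv_rhs => rw [← one_mul p.1, ← cos_sq_add_sin_sq p.2]
    simp only [B, neg_mul, LinearMap.det_toContinuousLinearMap, LinearMap.det_toLin,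
      Matrix.det_fin_two_of, sub_neg_eq_add]
    ring
  symm
  calc
    ∫⁻ p, f p = ∫⁻ p in polarCoord.source, f p := by
      rw [← setLIntegral_univ]
      exact (setLIntegral_congr polarCoord_source_ae_eq_univ.symm)
    _ = ∫⁻ p in polarCoord.symm '' polarCoord.target, f p := by
      rw [polarCoord.symm_image_target_eq_source]
    _ = ∫⁻ p in polarCoord.target, ENNReal.ofReal |(B p).det| * f (polarCoord.symm p) := by
      apply lintegral_image_eq_lintegral_abs_det_fderiv_mul volume
        polarCoord.open_target.measurableSet A
      exact polarCoord.symm.injOn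
    _ = ∫⁻ p in polarCoord.target, ENNReal.ofReal p.1 * f (polarCoord.symm p) := by
      apply setLIntegral_congr_fun polarCoord.open_target.measurableSet
      intro x hx
      dsimp only
      rw [B_det, abs_of_pos hx.1]

lemma meas_norm_rpow (α : ℝ) (hα : α ≠ 0) :
    Measurable fun x : EuclideanSpace ℝ (Fin 2) => ‖x‖ ^ (-α) := by
  have h : (fun x : EuclideanSpace ℝ (Fin 2) => ‖x‖ ^ (-α)) =
      fun x => if ‖x‖ = 0 then 0 else Real.exp (Real.log ‖x‖ * (-α)) := by
    funext x
    split_ifs with h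
    · rw [h, Real.zero_rpow (neg_ne_zero.2 hα)]
    · rw [Real.rpow_def_of_pos ((norm_nonneg x).lt_of_ne' h)]
  rw [h]
  exact Measurable.ite (measurable_norm (measurableSet_singleton 0)) measurable_const
    (Real.measurable_exp.comp ((Real.measurable_log.comp measurable_norm).mul_const _))

theorem key_volume (α c s : ℝ) (hα : 0 < α) (hc : 0 < c) (hs : 0 < s)
    (u₀ : EuclideanSpace ℝ (Fin 2) → ℝ) (hu₀ : Continuous u₀)
    (hu₀pos : ∀ x, ‖x‖ = 1 → 0 < u₀ x) :
    volume {x : EuclideanSpace ℝ (Fin 2) | s < c * (u₀ (‖x‖⁻¹ • x) * ‖x‖ ^ (-α))} =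
      ENNReal.ofReal ((c / s) ^ (2/α) *
        ((1/2) * ∫ θ in (0:ℝ)..(2*π), (u₀ (circ θ)) ^ (2/α))) := by
  have hu : ∀ θ : ℝ, 0 < u₀ (circ θ) := fun θ => hu₀pos _ (norm_circ θ)
  set ρ : ℝ → ℝ := fun θ => (c * u₀ (circ θ) / s) ^ α⁻¹ with hρdef
  have hρpos : ∀ θ, 0 < ρ θ := by
    intro θ
    have := hu θ
    exact Real.rpow_pos_of_pos (by positivity) _
  have hρcont : Continuous ρ :=
    ((continuous_const.mul (hu₀.comp cont_circ)).div_const s).rpow_const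
      (fun θ => Or.inr (inv_nonneg.2 hα.le))
  set S := {x : EuclideanSpace ℝ (Fin 2) | s < c * (u₀ (‖x‖⁻¹ • x) * ‖x‖ ^ (-α))} with hSdef
  have hSmeas : MeasurableSet S := by
    have hm : Measurable fun x : EuclideanSpace ℝ (Fin 2) =>
        c * (u₀ (‖x‖⁻¹ • x) * ‖x‖ ^ (-α)) := by
      apply measurable_const.mul
      exact (hu₀.measurable.comp ((measurable_norm.inv).smul measurable_id)).mul
        (meas_norm_rpow α hα.ne')
    exact measurableSet_lt measurable_const hm
  have hmem : ∀ p : ℝ × ℝ, 0 < p.1 → (polarCoord.symm p ∈ φeq ⁻¹' S ↔ p.1 < ρ p.2) := by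
    intro p hp
    have hnorm : ‖p.1 • circ p.2‖ = p.1 := norm_smul_circ p.1 p.2 hp.le
    have h2 : ‖p.1 • circ p.2‖⁻¹ • (p.1 • circ p.2) = circ p.2 := by
      rw [hnorm, smul_smul, inv_mul_cancel₀ hp.ne', one_smul]
    have h3 : p.1⁻¹ • p.1 • circ p.2 = circ p.2 := by
      rw [smul_smul, inv_mul_cancel₀ hp.ne', one_smul]
    simp only [Set.mem_preimage, φeq_polar, hSdef, Set.mem_setOf_eq, hnorm, h2, h3, ← mul_assoc]
    exact cond_iff α s (c * u₀ (circ p.2)) p.1 hα hs (by have := hu p.2; positivity) hp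
  have key0 : volume S = volume (φeq ⁻¹' S) :=
    (φeq_mp.measure_preimage hSmeas.nullMeasurableSet).symm
  rw [key0, ← lintegral_indicator_one (hSmeas.preimage φeq.measurable),
    ← my_lintegral_comp_polarCoord_symm]
  have congr1 : ∀ᵐ p : ℝ × ℝ, p ∈ polarCoord.target →
      ENNReal.ofReal p.1 * (φeq ⁻¹' S).indicator 1 (polarCoord.symm p) =
      (Ioo (0:ℝ) (ρ p.2)).indicator (fun t => ENNReal.ofReal t) p.1 := by
    filter_upwards with p hp
    have hp1 : 0 < p.1 := hp.1
    by_cases h : p.1 < ρ p.2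
    · rw [Set.indicator_of_mem ((hmem p hp1).2 h), Set.indicator_of_mem (by exact ⟨hp1, h⟩)]
      simp
    · rw [Set.indicator_of_notMem (fun hc' => h ((hmem p hp1).1 hc')),
        Set.indicator_of_notMem (fun hc' => h hc'.2)]
      simp
  rw [setLIntegral_congr_fun_ae polarCoord.open_target.measurableSet congr1]
  have htarget : polarCoord.target = Ioi (0:ℝ) ×ˢ Ioo (-π) π := rfl
  rw [htarget, Measure.volume_eq_prod, ← Measure.prod_restrict]
  have hfmeas : Measurable fun p : ℝ × ℝ =>
      (Ioo (0:ℝ) (ρ p.2)).indicator (fun t => ENNReal.ofReal t) p.1 := by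
    have heq : ∀ p : ℝ × ℝ, (Ioo (0:ℝ) (ρ p.2)).indicator (fun t => ENNReal.ofReal t) p.1 =
        Set.indicator {q : ℝ × ℝ | 0 < q.1 ∧ q.1 < ρ q.2} (fun q => ENNReal.ofReal q.1) p := by
      intro p
      simp [Set.indicator_apply, Set.mem_Ioo, Set.mem_setOf_eq]
    simp_rw [heq]
    exact (ENNReal.measurable_ofReal.comp measurable_fst).indicator
      ((measurableSet_lt measurable_const measurable_fst).inter
        (measurableSet_lt measurable_fst (hρcont.measurable.comp measurable_snd)))
  rw [lintegral_prod_symm _ hfmeas.aemeasurable]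
  have inner : ∀ θ : ℝ, (∫⁻ r in Ioi (0:ℝ),
      (Ioo (0:ℝ) (ρ θ)).indicator (fun t => ENNReal.ofReal t) r) =
      ENNReal.ofReal ((ρ θ) ^ 2 / 2) := by
    intro θ
    rw [lintegral_indicator measurableSet_Ioo, Measure.restrict_restrict measurableSet_Ioo,
      Set.inter_eq_self_of_subset_left Set.Ioo_subset_Ioi_self]
    have hint : IntegrableOn (fun t : ℝ => t) (Ioo (0:ℝ) (ρ θ)) volume :=
      (continuous_id.integrableOn_Icc).mono_set Set.Ioo_subset_Icc_self
    rw [← ofReal_integral_eq_lintegral_ofReal hint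
      ((ae_restrict_mem measurableSet_Ioo).mono fun x hx => hx.1.le)]
    congr 1
    rw [← MeasureTheory.integral_Ioc_eq_integral_Ioo,
      ← intervalIntegral.integral_of_le (hρpos θ).le, integral_id]
    norm_num
  simp_rw [inner]
  rw [← ofReal_integral_eq_lintegral_ofReal (f := fun θ => ρ θ ^ 2 / 2)
    (μ := volume.restrict (Ioo (-π) π))
    ((Continuous.integrableOn_Icc (f := fun θ => ρ θ ^ 2 / 2) ((hρcont.pow 2).div_const 2)).mono_set Set.Ioo_subset_Icc_self)
    (ae_of_all _ (fun θ => by positivity))]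
  congr 1
  have hper : Function.Periodic (fun θ : ℝ => ρ θ ^ 2 / 2) (2 * π) := by
    intro θ
    have hcirc : circ (θ + 2 * π) = circ θ := by
      ext i
      fin_cases i <;> simp [circ, Real.cos_add_two_pi, Real.sin_add_two_pi]
    simp only [hρdef, hcirc]
  calc ∫ θ in Ioo (-π) π, ρ θ ^ 2 / 2
      = ∫ θ in (-π)..π, ρ θ ^ 2 / 2 := by
        rw [intervalIntegral.integral_of_le (by linarith [pi_pos]),
          MeasureTheory.integral_Ioc_eq_integral_Ioo]
    _ = ∫ θ in (0:ℝ)..(2*π), ρ θ ^ 2 / 2 := by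
        have h := hper.intervalIntegral_add_eq (-π) 0
        simp only [zero_add] at h
        rw [show -π + 2 * π = π by ring] at h
        exact h
    _ = (c / s) ^ (2/α) * ((1/2) * ∫ θ in (0:ℝ)..(2*π), (u₀ (circ θ)) ^ (2/α)) := by
        rw [← mul_assoc, ← intervalIntegral.integral_const_mul]
        apply intervalIntegral.integral_congr
        intro θ _
        show ρ θ ^ 2 / 2 = (c / s) ^ (2 / α) * (1 / 2) * u₀ (circ θ) ^ (2 / α)
        have huθ := hu θ
        have hb : (0:ℝ) ≤ c * u₀ (circ θ) / s := by positivity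
        have e1 : ρ θ ^ 2 = (c * u₀ (circ θ) / s) ^ (2/α) := by
          rw [hρdef]
          rw [← Real.rpow_natCast ((c * u₀ (circ θ) / s) ^ α⁻¹) 2, ← Real.rpow_mul hb]
          norm_num
          rw [show α⁻¹ * 2 = 2/α by field_simp]
        have e2 : c * u₀ (circ θ) / s = (c/s) * u₀ (circ θ) := by ring
        rw [e1, e2, Real.mul_rpow (by positivity) huθ.le]
        ring

set_option maxHeartbeats 2000000 in
/-- If `U ≥ 0` on `ℝ²` satisfies `U(x) = u₀(x/|x|)|x|^{-α}(1+o(1))` uniformly as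
`|x| → ∞`, with `u₀ > 0` continuous on the circle, then as `s ↓ 0`,
`|{U > s}| = s^{-2/α} (1/2)∫_{S¹} u₀^{2/α} dt (1+o(1))`. -/
theorem superlevel_measure_asymptotics (α : ℝ) (hα : 0 < α)
    (U : EuclideanSpace ℝ (Fin 2) → ℝ) (u₀ : EuclideanSpace ℝ (Fin 2) → ℝ)
    (hU : Continuous U) (hUpos : ∀ x, 0 ≤ U x)
    (hu₀ : Continuous u₀) (hu₀pos : ∀ x, ‖x‖ = 1 → 0 < u₀ x)
    (hasym : ∀ ε > (0 : ℝ), ∃ R : ℝ, ∀ x : EuclideanSpace ℝ (Fin 2), R ≤ ‖x‖ →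
      |U x - u₀ (‖x‖⁻¹ • x) * ‖x‖ ^ (-α)| ≤ ε * (u₀ (‖x‖⁻¹ • x) * ‖x‖ ^ (-α))) :
    Tendsto
      (fun s : ℝ =>
        (volume {x : EuclideanSpace ℝ (Fin 2) | s < U x}).toReal / s ^ (-(2 / α)))
      (nhdsWithin 0 (Set.Ioi 0))
      (nhds ((1 / 2) * ∫ θ in (0 : ℝ)..(2 * Real.pi),
        (u₀ (WithLp.toLp 2 ![Real.cos θ, Real.sin θ] : EuclideanSpace ℝ (Fin 2))) ^ (2 / α))) := by
  simp only [show ∀ θ : ℝ, (WithLp.toLp 2 ![Real.cos θ, Real.sin θ] : EuclideanSpace ℝ (Fin 2)) = circ θ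
    from fun _ => rfl]
  set I := (1 / 2) * ∫ θ in (0 : ℝ)..(2 * π), (u₀ (circ θ)) ^ (2 / α) with hIdef
  have hInonneg : 0 ≤ I := by
    apply mul_nonneg (by norm_num)
    apply intervalIntegral.integral_nonneg (by positivity)
    intro θ _
    exact Real.rpow_nonneg (hu₀pos _ (norm_circ θ)).le _
  rw [Metric.tendsto_nhds]
  intro δ hδ
  -- pick ε
  have hcont : ContinuousAt (fun t : ℝ => t ^ (2 / α) * I) 1 :=
    (Real.continuousAt_rpow_const 1 (2 / α) (Or.inl one_ne_zero)).mul continuousAt_const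
  obtain ⟨ε', hε'pos, hε'⟩ := Metric.continuousAt_iff.1 hcont (δ / 2) (by linarith)
  set ε : ℝ := min (ε' / 2) (1 / 2) with hεdef
  have hεpos : 0 < ε := lt_min (by linarith) (by norm_num)
  have hεlt1 : ε < 1 := lt_of_le_of_lt (min_le_right _ _) (by norm_num)
  have hεltε' : ε < ε' := lt_of_le_of_lt (min_le_left _ _) (by linarith)
  have hup : |(1 + ε) ^ (2 / α) * I - I| < δ / 2 := by
    have := hε' (x := 1 + ε) (by
      rw [Real.dist_eq, show (1 + ε) - 1 = ε by ring, abs_of_nonneg hεpos.le]; linarith)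
    rwa [Real.dist_eq, Real.one_rpow, one_mul] at this
  have hdn : |(1 - ε) ^ (2 / α) * I - I| < δ / 2 := by
    have := hε' (x := 1 - ε) (by
      rw [Real.dist_eq, show (1 - ε) - 1 = -ε by ring, abs_neg, abs_of_nonneg hεpos.le]; linarith)
    rwa [Real.dist_eq, Real.one_rpow, one_mul] at this
  obtain ⟨R₀, hR₀⟩ := hasym ε hεpos
  set R : ℝ := max R₀ 0 with hRdef
  set CB := volume (Metric.closedBall (0 : EuclideanSpace ℝ (Fin 2)) R) with hCBdef
  have hCBfin : CB ≠ ⊤ := (IsCompact.measure_lt_top (isCompact_closedBall _ _)).ne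
  set B := CB.toReal with hBdef
  have hBnonneg : 0 ≤ B := ENNReal.toReal_nonneg
  -- eventual smallness
  have htend : Tendsto (fun s : ℝ => s ^ (2 / α) * B) (nhdsWithin 0 (Set.Ioi 0)) (nhds 0) := by
    have h0 : ContinuousAt (fun s : ℝ => s ^ (2 / α)) 0 :=
      Real.continuousAt_rpow_const 0 (2 / α) (Or.inr (by positivity))
    have : Tendsto (fun s : ℝ => s ^ (2 / α) * B) (nhds 0) (nhds ((0 : ℝ) ^ (2 / α) * B)) :=
      (h0.mul continuousAt_const).tendsto
    rw [Real.zero_rpow (by positivity), zero_mul] at this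
    exact this.mono_left nhdsWithin_le_nhds
  have hsmall : ∀ᶠ s in nhdsWithin (0:ℝ) (Set.Ioi 0), s ^ (2 / α) * B < δ / 2 := by
    have := htend.eventually (eventually_lt_nhds (show (0:ℝ) < δ / 2 by linarith))
    exact this
  filter_upwards [eventually_mem_nhdsWithin, hsmall] with s hs hsB
  have hspos : (0:ℝ) < s := hs
  -- the two comparison volumes
  have hVup := key_volume α (1 + ε) s hα (by linarith) hspos u₀ hu₀ hu₀pos
  have hVdn := key_volume α (1 - ε) s hα (by linarith) hspos u₀ hu₀ hu₀pos
  -- inclusions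
  have hsub1 : {x : EuclideanSpace ℝ (Fin 2) | s < U x} ⊆
      Metric.closedBall (0 : EuclideanSpace ℝ (Fin 2)) R ∪
      {x | s < (1 + ε) * (u₀ (‖x‖⁻¹ • x) * ‖x‖ ^ (-α))} := by
    intro x hx
    by_cases hxR : ‖x‖ ≤ R
    · exact Or.inl (by simpa [Metric.mem_closedBall, dist_zero_right] using hxR)
    · refine Or.inr ?_
      have hR' : R₀ ≤ ‖x‖ := le_trans (le_max_left _ _) (le_of_not_ge hxR)
      have habs := abs_le.1 (hR₀ x hR')
      have : U x ≤ (1 + ε) * (u₀ (‖x‖⁻¹ • x) * ‖x‖ ^ (-α)) := by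
        have h2 := habs.2
        nlinarith [habs.2]
      exact lt_of_lt_of_le hx this
  have hsub2 : {x : EuclideanSpace ℝ (Fin 2) | s < (1 - ε) * (u₀ (‖x‖⁻¹ • x) * ‖x‖ ^ (-α))} ⊆
      Metric.closedBall (0 : EuclideanSpace ℝ (Fin 2)) R ∪
      {x | s < U x} := by
    intro x hx
    by_cases hxR : ‖x‖ ≤ R
    · exact Or.inl (by simpa [Metric.mem_closedBall, dist_zero_right] using hxR)
    · refine Or.inr ?_
      have hR' : R₀ ≤ ‖x‖ := le_trans (le_max_left _ _) (le_of_not_ge hxR)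
      have habs := abs_le.1 (hR₀ x hR')
      have : (1 - ε) * (u₀ (‖x‖⁻¹ • x) * ‖x‖ ^ (-α)) ≤ U x := by
        nlinarith [habs.1]
      exact lt_of_lt_of_le hx this
  -- measure bounds
  have hμup : volume {x : EuclideanSpace ℝ (Fin 2) | s < U x} ≤
      CB + ENNReal.ofReal (((1 + ε) / s) ^ (2 / α) * ((1 / 2) * ∫ θ in (0:ℝ)..(2 * π), (u₀ (circ θ)) ^ (2 / α))) := by
    refine le_trans (measure_mono hsub1) (le_trans (measure_union_le _ _) ?_)
    rw [hVup]
  have hWfin : volume {x : EuclideanSpace ℝ (Fin 2) | s < U x} ≠ ⊤ := by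
    refine ne_top_of_le_ne_top ?_ hμup
    exact (ENNReal.add_ne_top.2 ⟨hCBfin, ENNReal.ofReal_ne_top⟩)
  set W := (volume {x : EuclideanSpace ℝ (Fin 2) | s < U x}).toReal with hWdef
  have hup_nonneg : (0:ℝ) ≤ ((1 + ε) / s) ^ (2 / α) * I :=
    mul_nonneg (Real.rpow_nonneg (by positivity) _) hInonneg
  have hdn_nonneg : (0:ℝ) ≤ ((1 - ε) / s) ^ (2 / α) * I :=
    mul_nonneg (Real.rpow_nonneg (div_nonneg (by linarith) hspos.le) _) hInonneg
  have hWup : W ≤ B + ((1 + ε) / s) ^ (2 / α) * I := by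
    have := ENNReal.toReal_mono (ENNReal.add_ne_top.2 ⟨hCBfin, ENNReal.ofReal_ne_top⟩) hμup
    rwa [ENNReal.toReal_add hCBfin ENNReal.ofReal_ne_top,
      ENNReal.toReal_ofReal hup_nonneg] at this
  have hWdn : ((1 - ε) / s) ^ (2 / α) * I ≤ B + W := by
    have hμdn : ENNReal.ofReal (((1 - ε) / s) ^ (2 / α) * I) ≤
        CB + volume {x : EuclideanSpace ℝ (Fin 2) | s < U x} := by
      rw [← hVdn]
      exact le_trans (measure_mono hsub2) (measure_union_le _ _)
    have := ENNReal.toReal_mono (ENNReal.add_ne_top.2 ⟨hCBfin, hWfin⟩) hμdn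
    rwa [ENNReal.toReal_add hCBfin hWfin, ENNReal.toReal_ofReal hdn_nonneg] at this
  -- convert to the normalized quantity
  have hsp_pos : (0:ℝ) < s ^ (2 / α) := Real.rpow_pos_of_pos hspos _
  have hgoal_eq : W / s ^ (-(2 / α)) = W * s ^ (2 / α) := by
    rw [Real.rpow_neg hspos.le, div_eq_mul_inv, inv_inv]
  have hdiv_up : ((1 + ε) / s) ^ (2 / α) = (1 + ε) ^ (2 / α) / s ^ (2 / α) :=
    Real.div_rpow (by linarith) hspos.le _
  have hdiv_dn : ((1 - ε) / s) ^ (2 / α) = (1 - ε) ^ (2 / α) / s ^ (2 / α) :=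
    Real.div_rpow (by linarith) hspos.le _
  have fact1 : W * s ^ (2 / α) ≤ B * s ^ (2 / α) + (1 + ε) ^ (2 / α) * I := by
    have := mul_le_mul_of_nonneg_right hWup hsp_pos.le
    rw [hdiv_up] at this
    calc W * s ^ (2 / α) ≤ (B + (1 + ε) ^ (2 / α) / s ^ (2 / α) * I) * s ^ (2 / α) := this
      _ = B * s ^ (2 / α) + (1 + ε) ^ (2 / α) * I := by
          field_simp
  have fact2 : (1 - ε) ^ (2 / α) * I ≤ B * s ^ (2 / α) + W * s ^ (2 / α) := by
    have := mul_le_mul_of_nonneg_right hWdn hsp_pos.le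
    rw [hdiv_dn] at this
    calc (1 - ε) ^ (2 / α) * I = (1 - ε) ^ (2 / α) / s ^ (2 / α) * I * s ^ (2 / α) := by
          field_simp
      _ ≤ (B + W) * s ^ (2 / α) := this
      _ = B * s ^ (2 / α) + W * s ^ (2 / α) := by ring
  have fact3 : B * s ^ (2 / α) < δ / 2 := by
    rw [mul_comm]; exact hsB
  have fact4 := abs_lt.1 hup
  have fact5 := abs_lt.1 hdn
  rw [Real.dist_eq, hgoal_eq, abs_sub_lt_iff]
  constructor <;> nlinarith [fact1, fact2, fact3, fact4.1, fact4.2, fact5.1, fact5.2]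
end

section
/- Let T be a Hilbert–Schmidt operator on a Hilbert space with eigenvalues (λ_n) counted with multiplicity. Then -1 is an eigenvalue of T if and only if det₂(I + T) = 0, where det₂(I + T) = ∏_n (1 + λ_n)e^{-λ_n} (the product converging absolutely). -/
open Filter

/-- For a Hilbert–Schmidt operator with eigenvalue sequence `(λ_n)` (so `∑ |λ_n|² < ∞`),
the regularized determinant `det₂(I+T) = ∏ (1+λ_n)e^{-λ_n}` converges, and it vanishes
if and only if `-1` is an eigenvalue, i.e. some `λ_n = -1`. -/
theorem det2_eq_zero_iff_neg_one_eigenvalue (lam : ℕ → ℂ)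
    (hHS : Summable fun n => ‖lam n‖ ^ 2) :
    ∃ P : ℂ,
      Tendsto (fun N => ∏ n ∈ Finset.range N, (1 + lam n) * Complex.exp (-lam n))
        atTop (nhds P) ∧
      (P = 0 ↔ ∃ n, lam n = -1) := by
  by_cases hev : ∃ n, lam n = -1
  · refine ⟨0, ?_, by simp [hev]⟩
    obtain ⟨n₀, hn₀⟩ := hev
    have : ∀ N, N ≥ n₀ + 1 →
        (∏ n ∈ Finset.range N, (1 + lam n) * Complex.exp (-lam n)) = 0 := by
      intro N hN
      apply Finset.prod_eq_zero (i := n₀) (Finset.mem_range.mpr (by omega))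
      simp [hn₀]
    exact Tendsto.congr' (eventuallyEq_of_mem (Ioi_mem_atTop n₀)
      (fun N hN => (this N hN).symm)) tendsto_const_nhds
  · push_neg at hev
    have h1 : ∀ n, (1 : ℂ) + lam n ≠ 0 := by
      intro n h
      exact hev n (by linear_combination h)
    -- the sequence tends to 0
    have hto : Tendsto (fun n => ‖lam n‖) atTop (nhds 0) := by
      have := hHS.tendsto_atTop_zero
      have h := this.sqrt
      simpa [Real.sqrt_sq (norm_nonneg _)] using h
    have hsmall : ∀ᶠ n in atTop, ‖lam n‖ ≤ 1 / 2 := by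
      have := hto.eventually (ge_mem_nhds (show (0:ℝ) < 1/2 by norm_num))
      filter_upwards [this] with n hn using hn
    -- summability of log(1+λ) - λ
    have hsum : Summable (fun n => Complex.log (1 + lam n) - lam n) := by
      apply Summable.of_norm_bounded_eventually_nat (g := fun n => ‖lam n‖ ^ 2) hHS
      filter_upwards [hsmall] with n hn
      have hlt : ‖lam n‖ < 1 := lt_of_le_of_lt hn (by norm_num)
      calc ‖Complex.log (1 + lam n) - lam n‖
          ≤ ‖lam n‖ ^ 2 * (1 - ‖lam n‖)⁻¹ / 2 :=
            Complex.norm_log_one_add_sub_self_le hlt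
        _ ≤ ‖lam n‖ ^ 2 := by
            have h2 : (1 - ‖lam n‖)⁻¹ ≤ 2 := by
              rw [inv_le_comm₀ (by linarith) (by norm_num)]
              linarith
            nlinarith [sq_nonneg ‖lam n‖]
    set S := ∑' n, (Complex.log (1 + lam n) - lam n) with hS
    refine ⟨Complex.exp S, ?_, by simp [Complex.exp_ne_zero, hev]⟩
    have key : ∀ N, (∏ n ∈ Finset.range N, (1 + lam n) * Complex.exp (-lam n))
        = Complex.exp (∑ n ∈ Finset.range N, (Complex.log (1 + lam n) - lam n)) := by
      intro N
      rw [Complex.exp_sum]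
      apply Finset.prod_congr rfl
      intro n _
      rw [sub_eq_add_neg, Complex.exp_add, Complex.exp_log (h1 n)]
    simp only [key]
    exact (Complex.continuous_exp.continuousAt.tendsto.comp
      hsum.hasSum.tendsto_sum_nat)
end
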